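/- Let m ∈ ℂ and consider the linear operators on C^∞(ℝ², ℂ) given by D₁f = f_x, D₂f = 2x f_x − m f, D₃f = x² f_x − mx f, and D₄f = f_y. If there exists a nonzero finite-dimensional subspace V of C^∞(ℝ², ℂ) with D_i(V) ⊆ V for i = 1, 2, 3, 4, then m is a nonnegative integer. -/

import Mathlib

/-- partial derivative in `x`. -/
noncomputable def pdx (f : ℝ × ℝ → ℂ) : ℝ × ℝ → ℂ := fun p => fderiv ℝ f p (1, 0)

/-- partial derivative in `y`. -/
noncomputable def pdy (f : ℝ × ℝ → ℂ) : ℝ × ℝ → ℂ := fun p => fderiv ℝ f p (0, 1)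

open Polynomial in
lemma aux_placeholder : True := trivial

/-- the coordinate function as a CLM -/
noncomputable def xCLM : (ℝ × ℝ) →L[ℝ] ℂ :=
  Complex.ofRealCLM.comp (ContinuousLinearMap.fst ℝ ℝ ℝ)

lemma xC_hasFDerivAt (p : ℝ × ℝ) :
    HasFDerivAt (fun q : ℝ × ℝ => ((q.1 : ℝ) : ℂ)) xCLM p :=
  xCLM.hasFDerivAt

lemma xC_differentiable : Differentiable ℝ (fun q : ℝ × ℝ => ((q.1 : ℝ) : ℂ)) :=
  fun p => (xC_hasFDerivAt p).differentiableAt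

lemma pdx_xC (p : ℝ × ℝ) : pdx (fun q : ℝ × ℝ => ((q.1 : ℝ) : ℂ)) p = 1 := by
  simp [pdx, (xC_hasFDerivAt p).fderiv, xCLM]

lemma pdx_mul (A B : ℝ × ℝ → ℂ) (hA : Differentiable ℝ A) (hB : Differentiable ℝ B)
    (p : ℝ × ℝ) :
    pdx (fun q => A q * B q) p = A p * pdx B p + B p * pdx A p := by
  simp [pdx, fderiv_fun_mul (hA p) (hB p), smul_eq_mul]

lemma pdx_xpow (k : ℕ) (p : ℝ × ℝ) :
    pdx (fun q : ℝ × ℝ => ((q.1 : ℝ) : ℂ) ^ k) p = (k : ℂ) * (p.1 : ℂ) ^ (k - 1) := by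
  induction k with
  | zero => simp [pdx]
  | succ n ih =>
    have : (fun q : ℝ × ℝ => ((q.1 : ℝ) : ℂ) ^ (n + 1))
        = fun q : ℝ × ℝ => ((q.1 : ℝ) : ℂ) ^ n * ((q.1 : ℝ) : ℂ) := by
      funext q; rw [pow_succ]
    rw [this, pdx_mul (fun q : ℝ × ℝ => ((q.1 : ℝ) : ℂ) ^ n) _ (xC_differentiable.pow n) xC_differentiable p, pdx_xC, ih]
    cases n with
    | zero => simp
    | succ j =>
      simp only [Nat.add_sub_cancel, Nat.succ_sub_one]
      push_cast
      ring

/-- Contradiction lemma:  a finite dimensional space cannot contain `x^k • f` for all `k`. -/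
lemma infinite_family_false (W : Submodule ℂ (ℝ × ℝ → ℂ)) (hfin : FiniteDimensional ℂ W)
    (f : ℝ × ℝ → ℂ) (hf : Continuous f) (hne : f ≠ 0)
    (hmem : ∀ k : ℕ, (fun p : ℝ × ℝ => ((p.1 : ℝ) : ℂ) ^ k * f p) ∈ W) : False := by
  classical
  obtain ⟨p₀, hp₀⟩ : ∃ p, f p ≠ 0 := Function.ne_iff.mp hne
  set n := Module.finrank ℂ W + 1 with hn
  set v : Fin n → W := fun k => ⟨_, hmem k⟩ with hv
  have hindep : LinearIndependent ℂ v := by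
    rw [Fintype.linearIndependent_iff]
    intro a ha i
    have ha' : ∀ p : ℝ × ℝ, (∑ k : Fin n, a k * ((p.1 : ℂ) ^ (k : ℕ))) * f p = 0 := by
      intro p
      have h := congrArg (fun w : W => (w : ℝ × ℝ → ℂ) p) ha
      simp only [hv, AddSubmonoidClass.coe_finset_sum, SetLike.val_smul, Finset.sum_apply,
        Pi.smul_apply, smul_eq_mul, ZeroMemClass.coe_zero, Pi.zero_apply] at h
      rw [Finset.sum_mul]
      rw [← h]
      exact Finset.sum_congr rfl fun k _ => by ring
    set q : Polynomial ℂ := ∑ k : Fin n, Polynomial.C (a k) * Polynomial.X ^ (k : ℕ) with hq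
    have heval : ∀ z : ℂ, q.eval z = ∑ k : Fin n, a k * z ^ (k : ℕ) := by
      intro z; simp [hq, Polynomial.eval_finset_sum]
    set S : Set ℝ := {x : ℝ | f (x, p₀.2) ≠ 0} with hS
    have hcont : Continuous fun x : ℝ => f (x, p₀.2) :=
      hf.comp (continuous_id.prodMk continuous_const)
    have hSopen : IsOpen S := isOpen_compl_singleton.preimage hcont
    have hx₀ : p₀.1 ∈ S := by simpa [hS] using hp₀
    have hSinf : S.Infinite := by
      obtain ⟨ε, hε, hball⟩ := Metric.isOpen_iff.mp hSopen _ hx₀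
      refine Set.Infinite.mono hball ?_
      rw [Real.ball_eq_Ioo]
      have : p₀.1 - ε < p₀.1 + ε := by linarith
      exact Set.Ioo_infinite this
    have hroots : {z : ℂ | q.IsRoot z}.Infinite := by
      refine Set.Infinite.mono ?_ (hSinf.image (Complex.ofReal_injective.injOn))
      rintro z ⟨x, hx, rfl⟩
      show q.eval (x : ℂ) = 0
      rw [heval]
      have h2 := ha' (x, p₀.2)
      rcases mul_eq_zero.mp h2 with h | h
      · exact h
      · exact absurd h hx
    have hq0 : q = 0 := Polynomial.eq_zero_of_infinite_isRoot q hroots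
    have hco : q.coeff (i : ℕ) = a i := by
      simp only [hq, Polynomial.finset_sum_coeff, Polynomial.coeff_C_mul,
        Polynomial.coeff_X_pow, mul_ite, mul_one, mul_zero]
      simp [Fin.val_inj, Finset.sum_ite_eq]
    rw [hq0] at hco
    simpa using hco.symm
  have hcard := hindep.fintype_card_le_finrank
  simp [Fintype.card_fin] at hcard
  omega

/-- If the operators `f ↦ f_x`, `f ↦ 2x f_x - m f`, `f ↦ x² f_x - mx f`,
`f ↦ f_y` admit a nonzero finite-dimensional invariant subspace of smooth
functions, then `m` is a nonnegative integer. -/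
theorem m_nat_of_invariant_subspace
    (m : ℂ) (V : Submodule ℂ (ℝ × ℝ → ℂ))
    (hsmooth : ∀ f ∈ V, ContDiff ℝ (⊤ : ℕ∞) f)
    (hne : V ≠ ⊥) (hfin : FiniteDimensional ℂ V)
    (hD₁ : ∀ f ∈ V, pdx f ∈ V)
    (hD₂ : ∀ f ∈ V, (fun p => 2 * (p.1 : ℂ) * pdx f p - m * f p) ∈ V)
    (hD₃ : ∀ f ∈ V, (fun p => (p.1 : ℂ) ^ 2 * pdx f p - m * (p.1 : ℂ) * f p) ∈ V)
    (hD₄ : ∀ f ∈ V, pdy f ∈ V) :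
    ∃ n : ℕ, m = n := by
  by_contra hnot
  push_neg at hnot
  -- the operator `∂x` as an endomorphism of V
  have hdiff : ∀ f ∈ V, Differentiable ℝ f := fun f hf => (hsmooth f hf).differentiable (by simp)
  let E : V →ₗ[ℂ] V :=
    { toFun := fun f => ⟨pdx f, hD₁ f f.2⟩
      map_add' := by
        intro f g
        ext p
        have hf := hdiff f f.2
        have hg := hdiff g g.2
        show pdx (↑f + ↑g) p = pdx (↑f) p + pdx (↑g) p
        simp only [pdx]
        rw [show ((f : ℝ × ℝ → ℂ) + (g : ℝ × ℝ → ℂ))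
            = (fun q => (f : ℝ × ℝ → ℂ) q + (g : ℝ × ℝ → ℂ) q) from rfl,
          fderiv_fun_add (hf p) (hg p)]
        simp
      map_smul' := by
        intro c f
        ext p
        have hf := hdiff f f.2
        show pdx (c • (f : ℝ × ℝ → ℂ)) p = c * pdx (↑f) p
        simp only [pdx]
        rw [show (c • (f : ℝ × ℝ → ℂ)) = (fun q => c • (f : ℝ × ℝ → ℂ) q) from rfl,
          fderiv_fun_const_smul (hf p) c]
        simp }
  haveI : Nontrivial V := Submodule.nontrivial_iff_ne_bot.mpr hne
  obtain ⟨c, hc⟩ := Module.End.exists_eigenvalue E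
  obtain ⟨f, hf⟩ := hc.exists_hasEigenvector
  have hf0 : (f : ℝ × ℝ → ℂ) ≠ 0 := by
    intro h
    exact hf.right (Subtype.ext h)
  have heig : ∀ p, pdx (f : ℝ × ℝ → ℂ) p = c * (f : ℝ × ℝ → ℂ) p := by
    intro p
    have h := congrArg (fun w : V => (w : ℝ × ℝ → ℂ) p) hf.apply_eq_smul
    simpa [E] using h
  have hfd : Differentiable ℝ (f : ℝ × ℝ → ℂ) := hdiff _ f.2
  set g : ℕ → (ℝ × ℝ → ℂ) := fun k p => ((p.1 : ℝ) : ℂ) ^ k * (f : ℝ × ℝ → ℂ) p with hgdef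
  have hpdxg : ∀ k p, pdx (g k) p
      = (k : ℂ) * (p.1 : ℂ) ^ (k - 1) * (f : ℝ × ℝ → ℂ) p
        + (p.1 : ℂ) ^ k * (c * (f : ℝ × ℝ → ℂ) p) := by
    intro k p
    rw [hgdef]
    rw [pdx_mul (fun q : ℝ × ℝ => ((q.1 : ℝ) : ℂ) ^ k) _ (xC_differentiable.pow k) hfd p, pdx_xpow, heig]
    ring
  have hg : ∀ k, g k ∈ V := by
    intro k
    induction k with
    | zero =>
      have : g 0 = (f : ℝ × ℝ → ℂ) := by funext p; simp [hgdef]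
      rw [this]; exact f.2
    | succ k ih =>
      by_cases hc0 : c = 0
      · -- use D₃
        have h3 := hD₃ (g k) ih
        have hkm : (k : ℂ) - m ≠ 0 := sub_ne_zero.mpr fun h => hnot k h.symm
        have key : (fun p : ℝ × ℝ => (p.1 : ℂ) ^ 2 * pdx (g k) p - m * (p.1 : ℂ) * g k p)
            = ((k : ℂ) - m) • g (k + 1) := by
          funext p
          rw [hpdxg k p]
          simp only [hgdef, hc0, Pi.smul_apply, smul_eq_mul]
          cases k with
          | zero => push_cast; ring
          | succ j =>
            simp only [Nat.succ_sub_one]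
            push_cast
            ring
        have : ((k : ℂ) - m) • g (k + 1) ∈ V := key ▸ h3
        have := V.smul_mem ((k : ℂ) - m)⁻¹ this
        rwa [inv_smul_smul₀ hkm] at this
      · -- use D₂
        have h2 := hD₂ (g k) ih
        have key : (fun p : ℝ × ℝ => 2 * (p.1 : ℂ) * pdx (g k) p - m * g k p)
            - (2 * (k : ℂ) - m) • g k = (2 * c) • g (k + 1) := by
          funext p
          rw [Pi.sub_apply, hpdxg k p]
          simp only [hgdef, Pi.sub_apply, Pi.smul_apply, smul_eq_mul]
          cases k with
          | zero => push_cast; ring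
          | succ j =>
            simp only [Nat.succ_sub_one]
            push_cast
            ring
        have hmem : (2 * c) • g (k + 1) ∈ V :=
          key ▸ V.sub_mem h2 (V.smul_mem _ ih)
        have h2c : (2 : ℂ) * c ≠ 0 := mul_ne_zero two_ne_zero hc0
        have := V.smul_mem ((2 : ℂ) * c)⁻¹ hmem
        rwa [inv_smul_smul₀ h2c] at this
  exact infinite_family_false V hfin _ (hsmooth _ f.2).continuous hf0 hg
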